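/- Let a : ℝ → M_n(ℂ) be continuous with a(t) Hermitian positive semidefinite for all t, let G solve G(0) = Id, G'(t) = -a(t)G(t), and set Γ(t) = G(t)·G(t)*. Then Γ solves Γ(0) = Id, Γ'(t) = -a(t)Γ(t) - Γ(t)a(t), each Γ(t) is Hermitian positive definite, and the function t ↦ ‖Γ(t)‖₂ is non-increasing on [0,∞). -/

import Mathlib

open Matrix
open scoped Matrix.Norms.L2Operator ComplexOrder

section Aux

open scoped InnerProductSpace

variable {n : ℕ}

/-- Applying a matrix (as a Euclidean CLM) to a fixed vector, as a continuous linear map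
in the matrix argument. -/
noncomputable def matApplyCLM (v : EuclideanSpace ℂ (Fin n)) :
    Matrix (Fin n) (Fin n) ℂ →L[ℂ] EuclideanSpace ℂ (Fin n) :=
  LinearMap.toContinuousLinearMap
    { toFun := fun M => toEuclideanCLM (𝕜 := ℂ) M v
      map_add' := fun M N => by simp
      map_smul' := fun c M => by simp }

@[simp] lemma matApplyCLM_apply (v : EuclideanSpace ℂ (Fin n))
    (M : Matrix (Fin n) (Fin n) ℂ) :
    matApplyCLM v M = toEuclideanCLM (𝕜 := ℂ) M v := rfl

/-- Derivative of the squared norm of a differentiable curve. -/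
lemma hasDerivAt_norm_sq_curve {u : ℝ → EuclideanSpace ℂ (Fin n)}
    {u' : EuclideanSpace ℂ (Fin n)} {t : ℝ} (hu : HasDerivAt u u' t) :
    HasDerivAt (fun s => ‖u s‖ ^ 2) (2 * (⟪u', u t⟫_ℂ).re) t := by
  have h1 : HasDerivAt (fun s => ⟪u s, u s⟫_ℂ) (⟪u t, u'⟫_ℂ + ⟪u', u t⟫_ℂ) t := hu.inner ℂ hu
  have h2 := Complex.reCLM.hasFDerivAt.comp_hasDerivAt t h1
  have heq : (⇑Complex.reCLM ∘ fun s => ⟪u s, u s⟫_ℂ) = fun s => ‖u s‖ ^ 2 := by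
    funext s
    simpa using inner_self_eq_norm_sq (𝕜 := ℂ) (u s)
  have hd : Complex.reCLM (⟪u t, u'⟫_ℂ + ⟪u', u t⟫_ℂ) = 2 * (⟪u', u t⟫_ℂ).re := by
    simp only [Complex.reCLM_apply, Complex.add_re]
    rw [← inner_conj_symm, Complex.conj_re]
    ring
  rw [heq, hd] at h2
  exact h2

lemma re_inner_psd_nonneg {A : Matrix (Fin n) (Fin n) ℂ} (hA : A.PosSemidef)
    (u : EuclideanSpace ℂ (Fin n)) :
    0 ≤ (⟪u, toEuclideanCLM (𝕜 := ℂ) A u⟫_ℂ).re := by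
  rw [EuclideanSpace.inner_eq_star_dotProduct]
  have h := hA.dotProduct_mulVec_nonneg u.ofLp
  rw [ofLp_toEuclideanCLM, dotProduct_comm]
  exact (Complex.le_def.mp h).1

lemma re_inner_le_opNorm (A : Matrix (Fin n) (Fin n) ℂ) (u : EuclideanSpace ℂ (Fin n)) :
    (⟪u, toEuclideanCLM (𝕜 := ℂ) A u⟫_ℂ).re ≤ ‖A‖ * (‖u‖ * ‖u‖) := by
  calc (⟪u, toEuclideanCLM (𝕜 := ℂ) A u⟫_ℂ).re
      ≤ ‖u‖ * ‖toEuclideanCLM (𝕜 := ℂ) A u‖ := by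
        simpa using re_inner_le_norm (𝕜 := ℂ) u (toEuclideanCLM (𝕜 := ℂ) A u)
  _ ≤ ‖u‖ * (‖A‖ * ‖u‖) := by
      have h := (toEuclideanCLM (𝕜 := ℂ) A).le_opNorm u
      rw [Matrix.cstar_norm_def]
      exact mul_le_mul_of_nonneg_left h (norm_nonneg _)
  _ = ‖A‖ * (‖u‖ * ‖u‖) := by ring

lemma isUnit_of_toEuclideanCLM_ne_zero (M : Matrix (Fin n) (Fin n) ℂ)
    (h : ∀ v : EuclideanSpace ℂ (Fin n), v ≠ 0 → toEuclideanCLM (𝕜 := ℂ) M v ≠ 0) :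
    IsUnit M := by
  rw [← Matrix.mulVec_injective_iff_isUnit]
  intro x y hxy
  by_contra hne
  refine h ((WithLp.equiv 2 _).symm (x - y)) ?_ ?_
  · intro hc
    apply hne
    have h2 := congrArg (WithLp.equiv 2 _) hc
    simp only [Equiv.apply_symm_apply] at h2
    exact sub_eq_zero.mp (by simpa using h2)
  · rw [WithLp.equiv_symm_apply, toEuclideanCLM_toLp, Matrix.mulVec_sub, hxy, sub_self]
    rfl

end Aux

section Main

open scoped InnerProductSpace

variable {n : ℕ}

/-- Core analytic lemma: with `G' = -aG`, for every `v` the function `s ↦ ‖G s v‖²`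
is antitone and, if `G 0 = 1` and `v ≠ 0`, stays strictly positive. -/
lemma norm_sq_antitone_and_pos (a G : ℝ → Matrix (Fin n) (Fin n) ℂ)
    (ha_cont : Continuous a) (ha_psd : ∀ t, (a t).PosSemidef)
    (hG0 : G 0 = 1) (hG : ∀ t, HasDerivAt G (-(a t) * G t) t)
    (v : EuclideanSpace ℂ (Fin n)) :
    Antitone (fun s => ‖toEuclideanCLM (𝕜 := ℂ) (G s) v‖ ^ 2) ∧
    (v ≠ 0 → ∀ t, toEuclideanCLM (𝕜 := ℂ) (G t) v ≠ 0) := by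
  set T : ℝ → EuclideanSpace ℂ (Fin n) →L[ℂ] EuclideanSpace ℂ (Fin n) :=
    fun s => toEuclideanCLM (𝕜 := ℂ) (G s) with hT
  set f : ℝ → ℝ := fun s => ‖T s v‖ ^ 2 with hfdef
  -- derivative of u
  have hu : ∀ t, HasDerivAt (fun s => T s v)
      (-(toEuclideanCLM (𝕜 := ℂ) (a t) (T t v))) t := by
    intro t
    have h := ((matApplyCLM v).restrictScalars ℝ).hasFDerivAt.comp_hasDerivAt t (hG t)
    simp at h
    exact h
  -- derivative of f
  have hf : ∀ t, HasDerivAt f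
      (-(2 * (⟪T t v, toEuclideanCLM (𝕜 := ℂ) (a t) (T t v)⟫_ℂ).re)) t := by
    intro t
    have h := hasDerivAt_norm_sq_curve (hu t)
    convert h using 1
    rw [inner_neg_left, Complex.neg_re, ← inner_conj_symm, Complex.conj_re]
    ring
  have hf_diff : Differentiable ℝ f := fun t => (hf t).differentiableAt
  have hderiv_nonpos : ∀ t, deriv f t ≤ 0 := by
    intro t
    rw [(hf t).deriv]
    have := re_inner_psd_nonneg (ha_psd t) (T t v)
    linarith
  have hanti : Antitone f := antitone_of_deriv_nonpos hf_diff hderiv_nonpos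
  refine ⟨hanti, fun hv t => ?_⟩
  -- positivity
  have hf0 : f 0 = ‖v‖ ^ 2 := by
    simp [hfdef, hT, hG0]
  have hf0pos : 0 < f 0 := by
    rw [hf0]
    exact pow_pos (norm_pos_iff.mpr hv) 2
  have hft : 0 < f t := by
    rcases le_or_gt t 0 with ht | ht
    · exact lt_of_lt_of_le hf0pos (hanti ht)
    · -- Grönwall-type bound on [0, t]
      obtain ⟨C, hC⟩ := (isCompact_Icc (a := (0:ℝ)) (b := t)).exists_bound_of_continuousOn
        ha_cont.continuousOn
      set g : ℝ → ℝ := fun s => f s * Real.exp (2 * C * s) with hgdef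
      have hg : ∀ s, HasDerivAt g
          (-(2 * (⟪T s v, toEuclideanCLM (𝕜 := ℂ) (a s) (T s v)⟫_ℂ).re) * Real.exp (2 * C * s)
            + f s * (Real.exp (2 * C * s) * (2 * C))) s := by
        intro s
        have he : HasDerivAt (fun s : ℝ => Real.exp (2 * C * s))
            (Real.exp (2 * C * s) * (2 * C)) s := by
          simpa using ((hasDerivAt_id s).const_mul (2 * C)).exp
        exact (hf s).mul he
      have hgmono : MonotoneOn g (Set.Icc 0 t) := by
        apply monotoneOn_of_deriv_nonneg (convex_Icc 0 t)
          (fun s _ => ((hg s).differentiableAt).continuousAt.continuousWithinAt)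
          (fun s _ => ((hg s).differentiableAt).differentiableWithinAt)
        intro s hs
        rw [interior_Icc] at hs
        rw [(hg s).deriv]
        have hbound := re_inner_le_opNorm (a s) (T s v)
        have hCs : ‖a s‖ ≤ C := hC s ⟨hs.1.le, hs.2.le⟩
        have hfs : 0 ≤ f s := by positivity
        have hexp : 0 < Real.exp (2 * C * s) := Real.exp_pos _
        have h1 : (⟪T s v, toEuclideanCLM (𝕜 := ℂ) (a s) (T s v)⟫_ℂ).re ≤ C * f s := by
          calc (⟪T s v, toEuclideanCLM (𝕜 := ℂ) (a s) (T s v)⟫_ℂ).re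
              ≤ ‖a s‖ * (‖T s v‖ * ‖T s v‖) := hbound
          _ ≤ C * (‖T s v‖ * ‖T s v‖) :=
              mul_le_mul_of_nonneg_right hCs (mul_self_nonneg _)
          _ = C * f s := by rw [hfdef]; ring
        nlinarith
      have hg0 : g 0 = f 0 := by simp [hgdef]
      have := hgmono (Set.left_mem_Icc.mpr ht.le) (Set.right_mem_Icc.mpr ht.le) ht.le
      rw [hg0] at this
      have hgt : 0 < f t * Real.exp (2 * C * t) := lt_of_lt_of_le hf0pos this
      have hexp : 0 < Real.exp (2 * C * t) := Real.exp_pos _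
      rcases mul_pos_iff.mp hgt with ⟨h1, _⟩ | ⟨_, h2⟩
      · exact h1
      · linarith
  intro hc
  rw [hfdef] at hft
  simp only [hT, hc, norm_zero] at hft
  norm_num at hft

end Main

/-- With `G' = -aG`, `G 0 = 1`, `a` continuous Hermitian positive semidefinite, the matrix
`Γ t = G t * (G t)*` satisfies `Γ 0 = 1`, `Γ' = -aΓ - Γa`, each `Γ t` is Hermitian positive
definite, and `t ↦ ‖Γ t‖₂` is non-increasing on `[0,∞)`. -/
theorem stmt_5 {n : ℕ} (a G : ℝ → Matrix (Fin n) (Fin n) ℂ)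
    (ha_cont : Continuous a) (ha_psd : ∀ t, (a t).PosSemidef)
    (hG0 : G 0 = 1) (hG : ∀ t, HasDerivAt G (-(a t) * G t) t) :
    (fun t => G t * (G t)ᴴ) 0 = 1 ∧
    (∀ t, HasDerivAt (fun t => G t * (G t)ᴴ)
      (-(a t) * (G t * (G t)ᴴ) - (G t * (G t)ᴴ) * a t) t) ∧
    (∀ t, (G t * (G t)ᴴ).PosDef) ∧
    AntitoneOn (fun t => ‖G t * (G t)ᴴ‖) (Set.Ici 0) := by
  have hkey := norm_sq_antitone_and_pos a G ha_cont ha_psd hG0 hG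
  have hUnit : ∀ t, IsUnit (G t) := fun t =>
    isUnit_of_toEuclideanCLM_ne_zero (G t) (fun v hv => (hkey v).2 hv t)
  refine ⟨?_, ?_, ?_, ?_⟩
  · simp [hG0]
  · intro t
    have hstar : ∀ s, HasDerivAt (fun s => (G s)ᴴ) ((-(a s) * G s)ᴴ) s := fun s => (hG s).star
    have h := (hG t).mul (hstar t)
    refine h.congr_deriv ?_
    rw [conjTranspose_mul, conjTranspose_neg, (ha_psd t).isHermitian.eq]
    noncomm_ring
  · intro t
    have hGinj : Function.Injective (G t).mulVec :=
      Matrix.mulVec_injective_iff_isUnit.mpr (hUnit t)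
    have hGHinj : Function.Injective ((G t)ᴴ).mulVec :=
      Matrix.mulVec_injective_iff_isUnit.mpr ((Matrix.isUnit_conjTranspose (G t)).mpr (hUnit t))
    have hpsd := posSemidef_self_mul_conjTranspose (G t)
    refine posDef_iff_dotProduct_mulVec.mpr ⟨hpsd.1, fun x hx => ?_⟩
    have hy : (G t)ᴴ *ᵥ x ≠ 0 := fun hc =>
      hx (hGHinj (show (G t)ᴴ *ᵥ x = (G t)ᴴ *ᵥ 0 by rw [hc, Matrix.mulVec_zero]))
    have hMx : (G t * (G t)ᴴ) *ᵥ x ≠ 0 := by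
      rw [← Matrix.mulVec_mulVec]
      exact fun hc =>
        hy (hGinj (show G t *ᵥ ((G t)ᴴ *ᵥ x) = G t *ᵥ 0 by rw [hc, Matrix.mulVec_zero]))
    exact lt_of_le_of_ne (hpsd.dotProduct_mulVec_nonneg x)
      (fun hc => hMx ((hpsd.dotProduct_mulVec_zero_iff x).mp hc.symm))
  · have hGn : ∀ t, ‖G t * (G t)ᴴ‖ = ‖G t‖ ^ 2 := by
      intro t
      rw [show ‖G t * (G t)ᴴ‖ = ‖((G t)ᴴ)ᴴ * (G t)ᴴ‖ by rw [conjTranspose_conjTranspose],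
        Matrix.l2_opNorm_conjTranspose_mul_self, Matrix.l2_opNorm_conjTranspose, sq]
    have hmono : ∀ s t : ℝ, s ≤ t → ‖G t‖ ≤ ‖G s‖ := by
      intro s t hst
      rw [Matrix.cstar_norm_def, Matrix.cstar_norm_def]
      refine ContinuousLinearMap.opNorm_le_bound _ (norm_nonneg _) (fun v => ?_)
      have h1 : ‖toEuclideanCLM (𝕜 := ℂ) (G t) v‖ ^ 2 ≤
          ‖toEuclideanCLM (𝕜 := ℂ) (G s) v‖ ^ 2 := (hkey v).1 hst
      have h2 : ‖toEuclideanCLM (𝕜 := ℂ) (G t) v‖ ≤ ‖toEuclideanCLM (𝕜 := ℂ) (G s) v‖ := by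
        nlinarith [norm_nonneg (toEuclideanCLM (𝕜 := ℂ) (G t) v),
          norm_nonneg (toEuclideanCLM (𝕜 := ℂ) (G s) v)]
      exact h2.trans ((toEuclideanCLM (𝕜 := ℂ) (G s)).le_opNorm v)
    intro s _ t _ hst
    simp only [hGn]
    exact pow_le_pow_left₀ (norm_nonneg _) (hmono s t hst) 2
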